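/- arXiv:1112.2960 — 2 statements merged into one kernel-verified Lean document; each statement's English description precedes it below -/
import Mathlib

section
/- Let R be a commutative Artinian ring, A an R-algebra finitely generated as R-module, and M a finitely generated A-module. If M is sincere and is not the middle of a short chain, then M is faithful: Ann_A(M) = 0. -/
open CategoryTheory

variable (A : Type) [Ring A]

/-- An indecomposable module: nontrivial, and the only idempotent endomorphisms are 0 and 1. -/
def Indec (X : ModuleCat A) : Prop :=
  Nontrivial X ∧ ∀ f : X ⟶ X, f ≫ f = f → f = 0 ∨ f = 𝟙 X

/-- Vanishing of the homomorphism space. -/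
def HomZero (X Y : ModuleCat A) : Prop := ∀ f : X ⟶ Y, f = 0

/-- `N` is a direct summand of `M`. -/
def Summand (N M : ModuleCat A) : Prop := ∃ (i : N ⟶ M) (p : M ⟶ N), i ≫ p = 𝟙 N

/-- An almost split (Auslander–Reiten) sequence `0 → X → E → Y → 0`. -/
def IsAlmostSplitSeq {X E Y : ModuleCat A} (f : X ⟶ E) (g : E ⟶ Y) : Prop :=
  Function.Injective f ∧ Function.Surjective g ∧
  LinearMap.range f.hom = LinearMap.ker g.hom ∧
  (¬ ∃ s : Y ⟶ E, s ≫ g = 𝟙 Y) ∧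
  ∀ (Z : ModuleCat A) (h : Z ⟶ Y), (¬ ∃ s : Y ⟶ Z, s ≫ h = 𝟙 Y) → ∃ h' : Z ⟶ E, h' ≫ g = h

/-- `τ` is an Auslander–Reiten translation: for each indecomposable non-projective `X`,
there is an almost split sequence `0 → τ X → E → X → 0`. -/
def IsARTranslation (τ : ModuleCat A → ModuleCat A) : Prop :=
  ∀ X : ModuleCat A, Indec A X → ¬ Projective X →
    ∃ (E : ModuleCat A) (f : τ X ⟶ E) (g : E ⟶ X), IsAlmostSplitSeq A f g

/-- `M` is the middle of a short chain `X → M → τ X`. -/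
def IsMiddleOfShortChain (τ : ModuleCat A → ModuleCat A) (M : ModuleCat A) : Prop :=
  ∃ X : ModuleCat A, Indec A X ∧ (∃ f : X ⟶ M, f ≠ 0) ∧ (∃ g : M ⟶ τ X, g ≠ 0)

/-- `M` is sincere: every simple module occurs as a composition factor of `M`. -/
def Sincere (M : ModuleCat A) : Prop :=
  ∀ (S : Type) [AddCommGroup S] [Module A S], IsSimpleModule A S →
    ∃ (N P : Submodule A M), P ≤ N ∧
      Nonempty ((↥N ⧸ Submodule.comap N.subtype P) ≃ₗ[A] S)

section ArtNoeth
variable {R : Type} [CommRing R] [IsArtinianRing R]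

lemma aux_nilrad_nilpotent : IsNilpotent (nilradical R) := by
  obtain ⟨n, hn⟩ := IsArtinianRing.isNilpotent_jacobson_bot (R := R)
  refine ⟨n, ?_⟩
  have hle : nilradical R ≤ Ideal.jacobson ⊥ := by
    intro x hx
    rw [Ideal.jacobson]
    refine Ideal.mem_sInf.mpr ?_
    rintro J ⟨-, hJ⟩
    have : IsNilpotent x := hx
    obtain ⟨k, hk⟩ := this
    exact hJ.isPrime.mem_of_pow_mem k (by rw [hk]; exact J.zero_mem)
  have : (nilradical R)^n ≤ ⊥ := by
    calc (nilradical R)^n ≤ (Ideal.jacobson ⊥)^n := Ideal.pow_right_mono hle n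
      _ = ⊥ := hn
  exact le_bot_iff.mp this

lemma aux_noeth_of_artinian_of_torsion (Q : Type) [AddCommGroup Q] [Module R Q]
    [IsArtinian R Q] (hQ : Module.IsTorsionBySet R Q (nilradical R : Set R)) :
    IsNoetherian R Q := by
  letI : Module (R ⧸ nilradical R) Q := hQ.module
  haveI : IsScalarTower R (R ⧸ nilradical R) Q := hQ.isScalarTower
  haveI : IsArtinian (R ⧸ nilradical R) Q := isArtinian_of_tower R ‹IsArtinian R Q›
  haveI : IsReduced (R ⧸ nilradical R) :=
    (Ideal.isRadical_iff_quotient_reduced _).mp (by rw [nilradical]; exact Ideal.radical_isRadical ⊥)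
  haveI : IsSemisimpleRing (R ⧸ nilradical R) :=
    IsArtinianRing.isSemisimpleRing_of_isReduced (R ⧸ nilradical R)
  haveI hN : IsNoetherian (R ⧸ nilradical R) Q := (IsSemisimpleModule.finite_tfae.out 2 1).mp ‹_›
  rw [isNoetherian_iff'] at hN ⊢
  let g : Submodule R Q → Submodule (R ⧸ nilradical R) Q := fun N =>
    { carrier := N
      add_mem' := fun ha hb => N.add_mem ha hb
      zero_mem' := N.zero_mem
      smul_mem' := by
        intro c x hx
        induction c using Quotient.inductionOn' with
        | h r =>
          have h1 : (Ideal.Quotient.mk (nilradical R) r) • x = r • x := hQ.mk_smul r x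
          have h2 : (Quotient.mk'' r : R ⧸ nilradical R) = Ideal.Quotient.mk (nilradical R) r :=
            rfl
          rw [h2, h1]
          exact N.smul_mem r hx }
  have hg : StrictMono g := by
    intro N₁ N₂ h
    exact ⟨fun x hx => h.1 hx, fun hle => h.2 (fun x hx => hle hx)⟩
  exact hg.wellFoundedGT

lemma aux_artinian_isNoetherianRing : IsNoetherianRing R := by
  obtain ⟨n, hn⟩ := aux_nilrad_nilpotent (R := R)
  have key : ∀ j, IsNoetherian R ↥((nilradical R) ^ (n - j) : Ideal R) := by
    intro j
    induction j with
    | zero =>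
      have e : ((nilradical R) ^ (n - 0) : Ideal R) = ⊥ := by rw [Nat.sub_zero]; exact hn
      rw [e]
      infer_instance
    | succ j ih =>
      by_cases hj : n - (j+1) = n - j
      · rw [hj]; exact ih
      have hstep : n - j = (n - (j+1)) + 1 := by omega
      set k := n - (j+1)
      -- 𝔫^(k+1) ≤ 𝔫^k
      have hle : ((nilradical R) ^ (k+1) : Ideal R) ≤ (nilradical R) ^ k :=
        Ideal.pow_le_pow_right (by omega)
      rw [hstep] at ih
      -- the submodule of ↥(𝔫^k) corresponding to 𝔫^(k+1)
      set Nk : Submodule R R := ((nilradical R) ^ k : Ideal R)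
      set N' : Submodule R ↥Nk := Submodule.comap Nk.subtype ((nilradical R) ^ (k+1) : Ideal R)
      have e1 : (↥((nilradical R) ^ (k+1) : Ideal R)) ≃ₗ[R] ↥N' :=
        (Submodule.comapSubtypeEquivOfLe hle).symm
      haveI h1 : IsNoetherian R ↥N' := isNoetherian_of_linearEquiv e1
      haveI h2 : IsNoetherian R (↥Nk ⧸ N') := by
        haveI : IsArtinian R (↥Nk ⧸ N') := inferInstance
        refine aux_noeth_of_artinian_of_torsion _ ?_
        intro q r
        induction q using Submodule.Quotient.induction_on with
        | _ x =>
          rw [← Submodule.Quotient.mk_smul, Submodule.Quotient.mk_eq_zero]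
          refine Submodule.mem_comap.mpr ?_
          have : (r : R) • (x : R) ∈ ((nilradical R) ^ (k+1) : Ideal R) := by
            rw [pow_succ']
            exact Ideal.mul_mem_mul r.2 x.2
          exact this
      exact (isNoetherian_iff_submodule_quotient N').mpr ⟨h1, h2⟩
  have h := key n
  have e : ((nilradical R) ^ (n - n) : Ideal R) = ⊤ := by
    rw [Nat.sub_self, pow_zero, Ideal.one_eq_top]
  rw [e] at h
  exact isNoetherian_top_iff.mp h
end ArtNoeth

universe u

lemma aux_split {A : Type} [Ring A]
    (τ : ModuleCat.{u} A → ModuleCat.{u} A) (hτ : IsARTranslation.{u} A τ)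
    (M : ModuleCat.{u} A) (hmid : ¬ IsMiddleOfShortChain.{u} A τ M)
    (W : Type u) [AddCommGroup W] [Module A W]
    (πW : ↥M →ₗ[A] W) (hπW : Function.Surjective πW)
    (I : Ideal A)
    (hIfull : ∀ x : A, x ∉ I → ∃ m : M, x • m ≠ 0)
    (hIkill : ∀ x ∈ I, ∀ m : M, x • m = 0)
    [IsArtinian A (A ⧸ I)] :
    ∀ V : Submodule A (A ⧸ I), ∀ (Y : Type u) [AddCommGroup Y] [Module A Y],
      ∀ (p : Y →ₗ[A] ↥V) (j : W →ₗ[A] Y), Function.Surjective p → Function.Injective j →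
      LinearMap.range j = LinearMap.ker p →
      ∃ s : ↥V →ₗ[A] Y, p.comp s = LinearMap.id := by
  have hwf : WellFounded ((· < ·) : Submodule A (A ⧸ I) → Submodule A (A ⧸ I) → Prop) :=
    IsWellFounded.wf
  intro V
  induction V using hwf.induction with
  | _ V IH =>
  intro Y _ _ p j hp hj hrange
  by_cases htriv : ∀ v : ↥V, v = 0
  · refine ⟨0, ?_⟩
    ext v
    rw [htriv v]
    simp
  push_neg at htriv
  obtain ⟨v₀, hv₀⟩ := htriv
  haveI hNT : Nontrivial ↥V := ⟨v₀, 0, hv₀⟩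
  -- a nonzero linear map `↥V →ₗ[A] ↥M`
  obtain ⟨x₀, hx₀⟩ := Submodule.Quotient.mk_surjective I (v₀ : A ⧸ I)
  have hx₀I : x₀ ∉ I := by
    intro hmem
    apply hv₀
    apply Subtype.ext
    show (v₀ : A ⧸ I) = 0
    rw [← hx₀]
    exact (Submodule.Quotient.mk_eq_zero I).mpr hmem
  obtain ⟨m₀, hm₀⟩ := hIfull x₀ hx₀I
  let toM : A →ₗ[A] ↥M :=
    { toFun := fun a => a • m₀
      map_add' := fun a b => add_smul a b m₀
      map_smul' := fun a b => mul_smul a b m₀ }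
  let ηq : (A ⧸ I) →ₗ[A] ↥M := Submodule.liftQ I toM (fun x hx => hIkill x hx m₀)
  let η : ↥V →ₗ[A] ↥M := ηq.comp V.subtype
  have hη : η v₀ ≠ 0 := by
    have h1 : η v₀ = x₀ • m₀ := by
      show ηq (v₀ : A ⧸ I) = x₀ • m₀
      rw [← hx₀]
      exact Submodule.liftQ_apply I toM x₀
    rw [h1]; exact hm₀
  -- move to universe u
  set X : ModuleCat.{u} A := ModuleCat.of A (ULift.{u} ↥V) with hX
  let uV : ↥X ≃ₗ[A] ↥V := ULift.moduleEquiv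
  by_cases hind : Indec A X
  · by_cases hproj : Projective X
    · haveI h1 : Module.Projective A (ULift.{u,0} ↥V) :=
        (IsProjective.iff_projective _).mpr
          (show Projective (ModuleCat.of A (ULift.{u,0} ↥V)) from hproj)
      haveI h2 : Module.Projective A ↥V :=
        Module.Projective.of_equiv (ULift.moduleEquiv : ULift.{u,0} ↥V ≃ₗ[A] ↥V)
      exact Module.projective_lifting_property p LinearMap.id hp
    · by_contra hns
      obtain ⟨E, f, g, hfinj, hgsurj, hfg, hgnosec, hlift⟩ := hτ X hind hproj
      have hMτ : ∀ u : ↥M →ₗ[A] ↥(τ X), u = 0 := by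
        intro u
        by_contra hu
        refine hmid ⟨X, hind, ⟨ModuleCat.ofHom (η.comp uV.toLinearMap), ?_⟩, ⟨ModuleCat.ofHom u, fun h => hu (congrArg ModuleCat.Hom.hom h)⟩⟩
        intro h0
        replace h0 : η.comp uV.toLinearMap = 0 := congrArg ModuleCat.Hom.hom h0
        apply hη
        have : η.comp uV.toLinearMap (uV.symm v₀) = 0 := by rw [h0]; rfl
        rwa [LinearMap.comp_apply, LinearEquiv.coe_toLinearMap, LinearEquiv.apply_symm_apply]
          at this
      have hWτ : ∀ u : W →ₗ[A] ↥(τ X), u = 0 := by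
        intro u
        have h0 : u.comp πW = 0 := hMτ (u.comp πW)
        ext w
        obtain ⟨m, rfl⟩ := hπW w
        exact congrFun (congrArg DFunLike.coe h0) m
      -- lift the extension map through g
      set Z : ModuleCat.{u} A := ModuleCat.of A Y with hZ
      let pX : Z ⟶ X := ModuleCat.ofHom (uV.symm.toLinearMap.comp p)
      have hnosec' : ¬ ∃ s : X ⟶ Z, s ≫ pX = 𝟙 X := by
        rintro ⟨s, hs⟩
        refine hns ⟨((s.hom : ↥X →ₗ[A] Y).comp uV.symm.toLinearMap), ?_⟩
        refine LinearMap.ext fun v => ?_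
        have h1 : pX (s (uV.symm v)) = uV.symm v := LinearMap.congr_fun (congrArg ModuleCat.Hom.hom hs) _
        have h2 : uV.symm (p (s (uV.symm v))) = uV.symm v := h1
        have h3 : p (s (uV.symm v)) = v := by
          have := congrArg uV h2
          rwa [LinearEquiv.apply_symm_apply, LinearEquiv.apply_symm_apply] at this
        exact h3
      obtain ⟨q, hq⟩ := hlift Z pX hnosec'
      have hgq : ∀ y : Y, g (q y) = uV.symm (p y) := by
        intro y
        exact LinearMap.congr_fun (congrArg ModuleCat.Hom.hom hq) y
      have hqj : ∀ w : W, q (j w) = 0 := by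
        have hmem : ∀ w : W, q (j w) ∈ LinearMap.range f.hom := by
          intro w
          rw [hfg]
          show g (q (j w)) = 0
          rw [hgq]
          have h2 : j w ∈ LinearMap.ker p := by
            rw [← hrange]; exact LinearMap.mem_range_self j w
          have h0 : p (j w) = 0 := h2
          rw [h0, map_zero]
        intro w
        let e := LinearEquiv.ofInjective (f.hom : ↥(τ X) →ₗ[A] ↥E) hfinj
        let u : W →ₗ[A] ↥(τ X) :=
          e.symm.toLinearMap.comp
            (LinearMap.codRestrict (LinearMap.range f.hom) ((q.hom : Y →ₗ[A] ↥E).comp j) hmem)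
        have hu := hWτ u
        have h3 : e.symm ⟨q (j w), hmem w⟩ = 0 := congrFun (congrArg DFunLike.coe hu) w
        have h2 : (⟨q (j w), hmem w⟩ : LinearMap.range f.hom) = 0 := by
          have h4 := congrArg e h3
          rwa [LinearEquiv.apply_symm_apply, map_zero] at h4
        exact congrArg Subtype.val h2
      have hker : LinearMap.ker p ≤ LinearMap.ker (q.hom : Y →ₗ[A] ↥E) := by
        intro y hy
        rw [← hrange] at hy
        obtain ⟨w, rfl⟩ := hy
        exact hqj w
      let qbar : ↥V →ₗ[A] ↥E :=
        (Submodule.liftQ (LinearMap.ker p) (q.hom : Y →ₗ[A] ↥E) hker).comp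
          (p.quotKerEquivOfSurjective hp).symm.toLinearMap
      have hqbar : ∀ y : Y, qbar (p y) = q y := by
        intro y
        have h1 : (p.quotKerEquivOfSurjective hp).symm (p y) = Submodule.Quotient.mk y := by
          rw [LinearEquiv.symm_apply_eq]
          rfl
        show (Submodule.liftQ (LinearMap.ker p) (q.hom : Y →ₗ[A] ↥E) hker)
            ((p.quotKerEquivOfSurjective hp).symm (p y)) = q y
        rw [h1]
        exact Submodule.liftQ_apply _ _ _
      refine hgnosec ⟨ModuleCat.ofHom (qbar.comp uV.toLinearMap), ModuleCat.hom_ext ?_⟩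
      show (g.hom : ↥E →ₗ[A] ↥X).comp (qbar.comp uV.toLinearMap) = LinearMap.id
      refine LinearMap.ext fun x => ?_
      obtain ⟨y, hy⟩ := hp (uV x)
      simp only [LinearMap.comp_apply, LinearMap.id_apply, LinearEquiv.coe_toLinearMap]
      rw [← hy, hqbar y]
      show g (q y) = x
      rw [hgq y, hy, LinearEquiv.symm_apply_apply]
  · have hee : ∃ e : X ⟶ X, e ≫ e = e ∧ e ≠ 0 ∧ e ≠ 𝟙 X := by
      haveI : Nontrivial ↥X := ⟨uV.symm v₀, 0, fun h0 => hv₀ (by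
        have := congrArg uV h0
        rwa [LinearEquiv.apply_symm_apply, map_zero] at this)⟩
      by_contra hno
      push_neg at hno
      exact hind ⟨‹Nontrivial ↥X›, fun e he => by
        by_cases h0 : e = 0
        · exact Or.inl h0
        · exact Or.inr (hno e he h0)⟩
    obtain ⟨e, hee2, he0, he1⟩ := hee
    let ee : ↥V →ₗ[A] ↥V := uV.toLinearMap.comp ((e.hom : ↥X →ₗ[A] ↥X).comp uV.symm.toLinearMap)
    have heX : ∀ z : ↥X, e z = uV.symm (ee (uV z)) := by
      intro z
      simp only [ee, LinearMap.comp_apply, LinearEquiv.coe_toLinearMap,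
        LinearEquiv.symm_apply_apply]
    have heidem : ∀ v : ↥V, ee (ee v) = ee v := by
      intro v
      show uV (e (uV.symm (uV (e (uV.symm v))))) = uV (e (uV.symm v))
      rw [uV.symm_apply_apply]
      exact congrArg uV (LinearMap.congr_fun (congrArg ModuleCat.Hom.hom hee2) (uV.symm v))
    have hee0 : ee ≠ 0 := by
      intro h0
      apply he0
      refine ModuleCat.hom_ext (LinearMap.ext fun z => ?_)
      show e z = 0
      rw [heX z, show ee (uV z) = 0 by rw [h0]; rfl, map_zero]
    have hee1 : ee ≠ LinearMap.id := by
      intro h1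
      apply he1
      refine ModuleCat.hom_ext (LinearMap.ext fun z => ?_)
      show e z = z
      rw [heX z, show ee (uV z) = uV z by rw [h1]; rfl, LinearEquiv.symm_apply_apply]
    set K₁ : Submodule A ↥V := LinearMap.ker ee with hK₁
    set K₂ : Submodule A ↥V := LinearMap.range ee with hK₂
    have hsub : ∀ K : Submodule A ↥V, Submodule.map V.subtype K < V →
        ∃ sh : ↥K →ₗ[A] Y, ∀ u : ↥K, p (sh u) = (u : ↥V) := by
      intro K hKlt
      set VK := Submodule.map V.subtype K with hVK
      let eqv : ↥K ≃ₗ[A] ↥VK := Submodule.equivMapOfInjective V.subtype V.injective_subtype K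
      set YK : Submodule A Y := Submodule.comap p K with hYK
      let r : ↥YK →ₗ[A] ↥K := LinearMap.codRestrict K (p.comp YK.subtype) (fun y => y.2)
      let pK : ↥YK →ₗ[A] ↥VK := eqv.toLinearMap.comp r
      have hjmem : ∀ w : W, j w ∈ YK := by
        intro w
        have h2 : j w ∈ LinearMap.ker p := by
          rw [← hrange]; exact LinearMap.mem_range_self j w
        show p (j w) ∈ K
        have h0 : p (j w) = 0 := h2
        rw [h0]
        exact K.zero_mem
      let jK : W →ₗ[A] ↥YK := LinearMap.codRestrict YK j hjmem
      have hpK : Function.Surjective pK := by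
        intro z
        obtain ⟨u, hu⟩ := eqv.surjective z
        obtain ⟨y, hy⟩ := hp (u : ↥V)
        refine ⟨⟨y, by show p y ∈ K; rw [hy]; exact u.2⟩, ?_⟩
        show eqv (r _) = z
        rw [← hu]
        congr 1
        apply Subtype.ext
        show p y = (u : ↥V)
        exact hy
      have hjK : Function.Injective jK := by
        intro w w' hww
        apply hj
        exact congrArg Subtype.val hww
      have hrangeK : LinearMap.range jK = LinearMap.ker pK := by
        apply le_antisymm
        · rintro _ ⟨w, rfl⟩
          show pK (jK w) = 0
          have h5 : r (jK w) = 0 := by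
            apply Subtype.ext
            show p (j w) = 0
            have h2 : j w ∈ LinearMap.ker p := by
              rw [← hrange]; exact LinearMap.mem_range_self j w
            exact h2
          show eqv (r (jK w)) = 0
          rw [h5]
          exact map_zero eqv.toLinearMap
        · intro y hy
          have h1 : eqv (r y) = 0 := hy
          have h2 : r y = 0 := by
            apply eqv.injective
            rw [h1]
            exact (map_zero eqv.toLinearMap).symm
          have h3 : p (y : Y) = 0 := congrArg Subtype.val h2
          have h4 : (y : Y) ∈ LinearMap.range j := by rw [hrange]; exact h3
          obtain ⟨w, hw⟩ := h4
          exact ⟨w, Subtype.ext hw⟩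
      obtain ⟨sK, hsK⟩ := IH VK hKlt (↥YK) pK jK hpK hjK hrangeK
      refine ⟨YK.subtype.comp (sK.comp eqv.toLinearMap), ?_⟩
      intro u
      have h1 : pK (sK (eqv u)) = eqv u := congrFun (congrArg DFunLike.coe hsK) (eqv u)
      have h2 : r (sK (eqv u)) = u := by
        apply eqv.injective
        exact h1
      exact congrArg Subtype.val h2
    have hV₁lt : Submodule.map V.subtype K₁ < V := by
      refine lt_of_le_of_ne (Submodule.map_subtype_le V K₁) ?_
      intro habs
      apply hee0
      have hKtop : K₁ = ⊤ := by
        rw [eq_top_iff]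
        intro u _
        have h6 : (u : A ⧸ I) ∈ Submodule.map V.subtype K₁ := by rw [habs]; exact u.2
        obtain ⟨u', hu', huu⟩ := h6
        have h7 : u' = u := Subtype.ext huu
        rwa [← h7]
      refine LinearMap.ext fun v => ?_
      have h8 : v ∈ K₁ := hKtop ▸ Submodule.mem_top
      exact h8
    have hV₂lt : Submodule.map V.subtype K₂ < V := by
      refine lt_of_le_of_ne (Submodule.map_subtype_le V K₂) ?_
      intro habs
      apply hee1
      have hKtop : K₂ = ⊤ := by
        rw [eq_top_iff]
        intro u _
        have h6 : (u : A ⧸ I) ∈ Submodule.map V.subtype K₂ := by rw [habs]; exact u.2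
        obtain ⟨u', hu', huu⟩ := h6
        have h7 : u' = u := Subtype.ext huu
        rwa [← h7]
      refine LinearMap.ext fun v => ?_
      show ee v = v
      have h8 : v ∈ K₂ := hKtop ▸ Submodule.mem_top
      obtain ⟨u, hu⟩ := h8
      rw [← hu, heidem]
    obtain ⟨s₁, hs₁⟩ := hsub K₁ hV₁lt
    obtain ⟨s₂, hs₂⟩ := hsub K₂ hV₂lt
    let c₁ : ↥V →ₗ[A] ↥K₁ := LinearMap.codRestrict K₁ (LinearMap.id - ee) (fun v => by
      show ee (v - ee v) = 0
      rw [map_sub, heidem, sub_self])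
    let c₂ : ↥V →ₗ[A] ↥K₂ := LinearMap.codRestrict K₂ ee (fun v => LinearMap.mem_range_self ee v)
    refine ⟨(s₁.comp c₁) + (s₂.comp c₂), ?_⟩
    refine LinearMap.ext fun v => ?_
    show p (s₁ (c₁ v) + s₂ (c₂ v)) = v
    rw [map_add, hs₁ (c₁ v), hs₂ (c₂ v)]
    show (v - ee v) + ee v = v
    abel

/-- **RSS, Corollary 3.2.** Let `R` be a commutative Artinian ring, `A`
an `R`-algebra finitely generated as an `R`-module, and `M` a finitely generated
`A`-module. If `M` is sincere and is not the middle of a short chain, then `M` is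
faithful: `Ann_A(M) = 0`. -/
theorem sincere_not_middle_of_short_chain_faithful
    (R : Type) [CommRing R] [IsArtinianRing R] [Algebra R A] [Module.Finite R A]
    (τ : ModuleCat A → ModuleCat A) (hτ : IsARTranslation A τ)
    (M : ModuleCat A) [Module.Finite A M] (hsinc : Sincere A M)
    (hmid : ¬ IsMiddleOfShortChain A τ M) :
    ∀ a : A, (∀ m : M, a • m = 0) → a = 0 := by
  intro a ha
  by_contra ha0
  -- the annihilator ideal of M
  let I : Ideal A :=
    { carrier := {x : A | ∀ m : ↥M, x • m = 0}
      add_mem' := fun {x y} hx hy m => by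
        rw [add_smul, hx m, hy m, add_zero]
      zero_mem' := fun m => zero_smul A m
      smul_mem' := fun c x hx m => by
        rw [smul_eq_mul, mul_smul, hx m, smul_zero] }
  have haI : a ∈ I := ha
  have hIkill : ∀ x ∈ I, ∀ m : M, x • m = 0 := fun x hx m => hx m
  have hIfull : ∀ x : A, x ∉ I → ∃ m : M, x • m ≠ 0 := by
    intro x hx
    by_contra hno
    push_neg at hno
    exact hx (fun m => hno m)
  -- instances
  haveI : IsArtinianRing A := IsArtinianRing.of_finite R A
  haveI : IsArtinian A (A ⧸ I) := inferInstance
  haveI : IsNoetherianRing R := aux_artinian_isNoetherianRing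
  haveI : IsNoetherian R A := isNoetherian_of_isNoetherianRing_of_finite R A
  haveI : IsNoetherian A A := isNoetherian_of_tower R ‹IsNoetherian R A›
  haveI : IsNoetherian A ↥I := inferInstance
  -- a maximal proper submodule of I
  have hznz : (⟨a, haI⟩ : ↥I) ≠ 0 := by
    intro h0
    exact ha0 (congrArg Subtype.val h0)
  obtain ⟨I'', hI''ne, hI''max⟩ :=
    (set_has_maximal_iff_noetherian.mpr ‹IsNoetherian A ↥I›) {N : Submodule A ↥I | N ≠ ⊤}
      ⟨⊥, fun h => hznz (by
        have : (⟨a, haI⟩ : ↥I) ∈ (⊥ : Submodule A ↥I) := h ▸ Submodule.mem_top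
        exact this)⟩
  have hcoatom : IsCoatom I'' := by
    constructor
    · exact hI''ne
    · intro b hb
      by_contra hbne
      exact hI''max b hbne hb
  haveI hsimple : IsSimpleModule A (↥I ⧸ I'') := isSimpleModule_iff_isCoatom.mpr hcoatom
  -- sincerity: the simple module ↥I ⧸ I'' is a composition factor of M
  obtain ⟨N, P, hPN, ⟨q⟩⟩ := hsinc (↥I ⧸ I'') hsimple
  -- the map φ : ↥I →ₗ[A] (↥M ⧸ P)
  let W := (↥M ⧸ P)
  let ξ : ↥N →ₗ[A] W := P.mkQ.comp N.subtype
  have hkerξ : Submodule.comap N.subtype P = LinearMap.ker ξ := by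
    ext x
    show (x : ↥M) ∈ P ↔ P.mkQ (x : ↥M) = 0
    rw [Submodule.mkQ_apply, Submodule.Quotient.mk_eq_zero]
  let θ : (↥N ⧸ Submodule.comap N.subtype P) →ₗ[A] W :=
    Submodule.liftQ (Submodule.comap N.subtype P) ξ (le_of_eq hkerξ)
  have hθinj : Function.Injective θ :=
    LinearMap.ker_eq_bot.mp (Submodule.ker_liftQ_eq_bot' _ ξ hkerξ)
  let φ : ↥I →ₗ[A] W := θ.comp (q.symm.toLinearMap.comp I''.mkQ)
  have hφ : ∃ z : ↥I, φ z ≠ 0 := by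
    have : ∃ z : ↥I, z ∉ I'' := by
      by_contra hall
      push_neg at hall
      exact hI''ne (Submodule.eq_top_iff'.mpr hall)
    obtain ⟨z, hz⟩ := this
    refine ⟨z, ?_⟩
    intro h0
    have h1 : q.symm (I''.mkQ z) = 0 := hθinj (by
      rw [map_zero]
      exact h0)
    have h2 : I''.mkQ z = 0 := by
      have := congrArg q h1
      rwa [LinearEquiv.apply_symm_apply, map_zero] at this
    rw [Submodule.mkQ_apply, Submodule.Quotient.mk_eq_zero] at h2
    exact hz h2
  obtain ⟨z₀, hφz⟩ := hφ
  -- the pushout extension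
  let d : ↥I →ₗ[A] W × A := LinearMap.prod φ (-(I.subtype))
  let D : Submodule A (W × A) := LinearMap.range d
  let Y₀ := (W × A) ⧸ D
  let j : W →ₗ[A] Y₀ := D.mkQ.comp (LinearMap.inl A W A)
  let pq : W × A →ₗ[A] (A ⧸ I) := I.mkQ.comp (LinearMap.snd A W A)
  have hDker : D ≤ LinearMap.ker pq := by
    rintro _ ⟨i, rfl⟩
    show I.mkQ (-(i : A)) = 0
    rw [map_neg, Submodule.mkQ_apply, neg_eq_zero, Submodule.Quotient.mk_eq_zero]
    exact i.2
  let p₀ : Y₀ →ₗ[A] (A ⧸ I) := Submodule.liftQ D pq hDker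
  let pT : Y₀ →ₗ[A] ↥(⊤ : Submodule A (A ⧸ I)) :=
    LinearMap.codRestrict ⊤ p₀ (fun y => Submodule.mem_top)
  have hpT : Function.Surjective pT := by
    intro y
    obtain ⟨x, hx⟩ := Submodule.Quotient.mk_surjective I (y : A ⧸ I)
    refine ⟨D.mkQ (0, x), ?_⟩
    apply Subtype.ext
    show p₀ (D.mkQ (0, x)) = (y : A ⧸ I)
    rw [Submodule.mkQ_apply, Submodule.liftQ_apply]
    show I.mkQ x = (y : A ⧸ I)
    rw [Submodule.mkQ_apply, hx]
  have hjinj : Function.Injective j := by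
    intro w w' hww
    have h0 : D.mkQ (w - w', 0) = 0 := by
      have : D.mkQ ((w, 0) - (w', 0)) = 0 := by
        rw [map_sub]
        rw [sub_eq_zero]
        exact hww
      convert this using 2
      simp [Prod.ext_iff]
    rw [Submodule.mkQ_apply, Submodule.Quotient.mk_eq_zero] at h0
    obtain ⟨i, hi⟩ := h0
    have hi2 : -(i : A) = 0 := congrArg Prod.snd hi
    have hi0 : i = 0 := by
      have hival : (i : A) = 0 := neg_eq_zero.mp hi2
      exact Subtype.ext (by rw [hival]; rfl)
    have hi1 : φ i = w - w' := congrArg Prod.fst hi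
    rw [hi0, map_zero] at hi1
    exact sub_eq_zero.mp hi1.symm
  have hjrange : LinearMap.range j = LinearMap.ker pT := by
    apply le_antisymm
    · rintro _ ⟨w, rfl⟩
      show pT (j w) = 0
      apply Subtype.ext
      show p₀ (D.mkQ (w, 0)) = 0
      rw [Submodule.mkQ_apply, Submodule.liftQ_apply]
      show I.mkQ 0 = 0
      rw [map_zero]
    · intro y hy
      obtain ⟨⟨w, x⟩, hwx⟩ := Submodule.Quotient.mk_surjective D y
      subst hwx
      have h1 : p₀ (Submodule.Quotient.mk (w, x)) = 0 := congrArg Subtype.val hy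
      have h2 : I.mkQ x = 0 := h1
      rw [Submodule.mkQ_apply, Submodule.Quotient.mk_eq_zero] at h2
      refine ⟨w + φ ⟨x, h2⟩, ?_⟩
      show D.mkQ (w + φ ⟨x, h2⟩, 0) = Submodule.Quotient.mk (w, x)
      rw [Submodule.mkQ_apply, Submodule.Quotient.eq]
      refine ⟨⟨x, h2⟩, ?_⟩
      show (φ ⟨x, h2⟩, -x) = (w + φ ⟨x, h2⟩, 0) - (w, x)
      simp [Prod.ext_iff]
  -- split the extension
  obtain ⟨s, hs⟩ := aux_split τ hτ M hmid W P.mkQ (Submodule.Quotient.mk_surjective P) I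
    hIfull hIkill (⊤ : Submodule A (A ⧸ I)) Y₀ pT j hpT hjinj hjrange
  -- derive the contradiction
  let χ : A →ₗ[A] Y₀ := D.mkQ.comp (LinearMap.inr A W A)
  let ρ : A →ₗ[A] Y₀ := χ - (s.comp (pT.comp χ))
  have hρmem : ∀ x : A, ρ x ∈ LinearMap.range j := by
    intro x
    rw [hjrange]
    show pT (χ x - s (pT (χ x))) = 0
    rw [map_sub]
    have h1 : pT (s (pT (χ x))) = pT (χ x) := congrFun (congrArg DFunLike.coe hs) (pT (χ x))
    rw [h1, sub_self]
  let ej := LinearEquiv.ofInjective j hjinj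
  let ψ : A →ₗ[A] W :=
    ej.symm.toLinearMap.comp (LinearMap.codRestrict (LinearMap.range j) ρ hρmem)
  have hψ : ∀ i : ↥I, ψ (i : A) = φ i := by
    intro i
    have h1 : χ (i : A) = j (φ i) := by
      show D.mkQ (0, (i : A)) = D.mkQ (φ i, 0)
      rw [Submodule.mkQ_apply, Submodule.mkQ_apply, Submodule.Quotient.eq]
      refine ⟨-i, ?_⟩
      show d (-i) = (0, (i : A)) - (φ i, 0)
      simp [d, Prod.ext_iff]
    have h2 : pT (χ (i : A)) = 0 := by
      apply Subtype.ext
      show p₀ (D.mkQ (0, (i : A))) = 0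
      rw [Submodule.mkQ_apply, Submodule.liftQ_apply]
      show I.mkQ (i : A) = 0
      rw [Submodule.mkQ_apply, Submodule.Quotient.mk_eq_zero]
      exact i.2
    have h3 : ρ (i : A) = j (φ i) := by
      show χ (i : A) - s (pT (χ (i : A))) = j (φ i)
      rw [h2, map_zero, sub_zero, h1]
    show ej.symm ⟨ρ (i : A), hρmem (i : A)⟩ = φ i
    have h4 : (⟨ρ (i : A), hρmem (i : A)⟩ : LinearMap.range j) = ej (φ i) := by
      apply Subtype.ext
      show ρ (i : A) = ((ej (φ i)) : Y₀)
      rw [h3]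
      exact (LinearEquiv.ofInjective_apply j (φ i)).symm
    rw [h4, LinearEquiv.symm_apply_apply]
  have hzero : ∀ i : ↥I, φ i = 0 := by
    intro i
    have hmul : (i : A) • (1 : A) = (i : A) := by rw [smul_eq_mul, mul_one]
    have h1 : ψ (i : A) = (i : A) • ψ 1 := by
      rw [← map_smul ψ (i : A) 1, hmul]
    have h2 : (i : A) • ψ 1 = 0 := by
      obtain ⟨m', hm'⟩ := Submodule.Quotient.mk_surjective P (ψ 1)
      rw [← hm', ← Submodule.Quotient.mk_smul, i.2 m', Submodule.Quotient.mk_zero]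
    rw [← hψ i, h1, h2]
  exact hφz (hzero z₀)
end

section
/- Let A be an artin algebra with a decomposition Γ_A = P(A) ∨ T₀ ∨ (⋁_{q ∈ ℚ⁺} T_q) ∨ T_∞ ∨ Q(A) as for a tubular algebra, with Hom_A(Q(A), T_∞) = 0. Then A admits no faithful finitely generated module M all of whose indecomposable direct summands lie in Q(A), provided T_∞ contains an indecomposable injective module I. -/
open CategoryTheory

variable (A : Type) [Ring A]

theorem pi_hom_zero {A : Type} [Ring A] {κ : Type} [Fintype κ] [DecidableEq κ]
    (D : κ → Type) [∀ i, AddCommGroup (D i)] [∀ i, Module A (D i)]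
    (I : Type) [AddCommGroup I] [Module A I]
    (h : ∀ i (g : D i →ₗ[A] I), g = 0) (f : (∀ i, D i) →ₗ[A] I) : f = 0 := by
  refine LinearMap.ext fun v => ?_
  have hv : v = ∑ i, Pi.single i (v i) := by
    rw [Finset.univ_sum_single]
  rw [hv, map_sum]
  have h2 : ∀ i ∈ Finset.univ, f (Pi.single i (v i)) = 0 := by
    intro i _
    have := h i (f.comp (LinearMap.single A D i))
    exact congrFun (congrArg DFunLike.coe this) (v i)
  rw [Finset.sum_eq_zero h2]
  rfl

/-- Let `A` have a tubular-type decomposition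
`Γ_A = P(A) ∨ T₀ ∨ (⋁_{q ∈ ℚ⁺} T_q) ∨ T_∞ ∨ Q(A)` with the hom-vanishing conditions
`Hom(T_s, T_r) = 0` for `r < s` and `Hom(Q(A), T_∞) = 0`, and suppose `T_∞` contains an
indecomposable injective module `I`. Then `A` admits no faithful finitely generated
module `M` all of whose indecomposable direct summands lie in `Q(A)`. -/
theorem tubular_type_no_faithful_module_in_preinjective_part
    (R : Type) [CommRing R] [IsArtinianRing R] [Algebra R A] [Module.Finite R A]
    (PA T0 Tinf QA : Set (ModuleCat.{0} A)) (Tq : ℚ → Set (ModuleCat.{0} A))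
    (hT0inf : ∀ U ∈ Tinf, ∀ V ∈ T0, HomZero A U V)
    (hTq0 : ∀ q : ℚ, 0 < q → ∀ U ∈ Tq q, ∀ V ∈ T0, HomZero A U V)
    (hTqq : ∀ r s : ℚ, 0 < r → r < s → ∀ U ∈ Tq s, ∀ V ∈ Tq r, HomZero A U V)
    (hTinfq : ∀ q : ℚ, 0 < q → ∀ U ∈ Tinf, ∀ V ∈ Tq q, HomZero A U V)
    (hQinf : ∀ U ∈ QA, ∀ V ∈ Tinf, HomZero A U V)
    (hI : ∃ I ∈ Tinf, Indec A I ∧ Injective I) :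
    ¬ ∃ (M : ModuleCat.{0} A), Module.Finite A M ∧
        (∀ a : A, (∀ m : M, a • m = 0) → a = 0) ∧
        (∀ N : ModuleCat.{0} A, Indec A N → Summand A N M → N ∈ QA) ∧
        ∃ (n : ℕ) (D : Fin n → ModuleCat.{0} A), Nonempty (M ≃ₗ[A] (∀ i, D i)) ∧
          ∀ i, Indec A (D i) ∧ D i ∈ QA := by
  classical
  rintro ⟨M, hfin, hfaith, -, n, D, ⟨e⟩, hD⟩
  obtain ⟨I, hITinf, hIindec, hIinj⟩ := hI
  haveI : Nontrivial I := hIindec.1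
  -- every linear map M →ₗ[A] I is zero
  have hMI : ∀ f : M →ₗ[A] I, f = 0 := by
    intro f
    have hDi : ∀ i (g : D i →ₗ[A] I), g = 0 := fun i g =>
      by simpa using congrArg ModuleCat.Hom.hom (hQinf (D i) (hD i).2 I hITinf (ModuleCat.ofHom g))
    have hpi : (f.comp (e.symm.toLinearMap) : (∀ i, D i) →ₗ[A] I) = 0 :=
      pi_hom_zero _ _ hDi _
    refine LinearMap.ext fun m => ?_
    have := congrFun (congrArg DFunLike.coe hpi) (e m)
    simpa using this
  -- the ring A is artinian as a module over itself
  have hart : IsArtinian A A := isArtinian_of_tower R inferInstance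
  -- family of kernels
  let K : M → Submodule A A := fun m => LinearMap.ker (LinearMap.toSpanSingleton A M m)
  -- a finite subfamily with trivial intersection
  obtain ⟨N, ⟨s, rfl⟩, hmin⟩ :=
    IsArtinian.set_has_minimal {N : Submodule A A | ∃ s : Finset M, N = s.inf K}
      ⟨⊤, ∅, by simp⟩
  have hbot : s.inf K = ⊥ := by
    have hle : ∀ m : M, s.inf K ≤ K m := by
      intro m
      by_contra hc
      have h1 : s.inf K ⊓ K m < s.inf K := by
        rcases lt_or_eq_of_le (inf_le_left : s.inf K ⊓ K m ≤ s.inf K) with h | h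
        · exact h
        · exact absurd (h ▸ inf_le_right : s.inf K ≤ K m) hc
      exact hmin _ ⟨insert m s, by rw [Finset.inf_insert, inf_comm]⟩ h1
    refine le_bot_iff.mp fun a ha => ?_
    have : ∀ m : M, a • m = 0 := fun m => hle m ha
    simpa using hfaith a this
  -- the injection A → (s → M)
  let ι : A →ₗ[A] (↥s → M) := LinearMap.pi fun m => LinearMap.toSpanSingleton A M m.1
  have hιinj : Function.Injective ι := by
    rw [← LinearMap.ker_eq_bot, eq_bot_iff]
    intro a ha
    have hmem : a ∈ s.inf K := by
      rw [Submodule.mem_finsetInf]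
      intro m hm
      exact congrFun (LinearMap.mem_ker.mp ha) ⟨m, hm⟩
    rw [hbot] at hmem
    exact hmem
  -- nonzero element of I
  obtain ⟨x, hx⟩ := exists_ne (α := I) 0
  -- categorical setup
  let AA : ModuleCat.{0} A := ModuleCat.of A A
  let P : ModuleCat.{0} A := ModuleCat.of A (↥s → M)
  let ιc : AA ⟶ P := ModuleCat.ofHom ι
  haveI : Mono ιc := (ModuleCat.mono_iff_injective ιc).mpr hιinj
  let g : AA ⟶ I := ModuleCat.ofHom (LinearMap.toSpanSingleton A I x)
  let h : P ⟶ I := Injective.factorThru g ιc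
  have hcomm : ιc ≫ h = g := Injective.comp_factorThru g ιc
  have hh0 : (h.hom : (↥s → M) →ₗ[A] I) = 0 :=
    pi_hom_zero (fun _ : ↥s => (M : Type)) I (fun _ f => hMI f) h.hom
  have hzero : g (1 : A) = 0 := by
    rw [← hcomm]
    show h.hom (ι 1) = 0
    rw [hh0]
    rfl
  apply hx
  have : (LinearMap.toSpanSingleton A I x) (1 : A) = 0 := hzero
  simpa using this
end
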